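/- With λ = exp(-5πi/24), j = exp(2πi/3), and x_c = 1/√(2+√2), one has 1 + x_c · j · conj(λ) + x_c · conj(j) · λ = 0. -/

import Mathlib

open Complex

/-- With `λ = exp(-5πi/24)`, `j = exp(2πi/3)` and `x_c = 1/√(2+√2)`, one has
`1 + x_c · j · conj(λ) + x_c · conj(j) · λ = 0`. -/
theorem key_local_identity :
    (1 : ℂ)
      + (1 / Real.sqrt (2 + Real.sqrt 2) : ℝ) * Complex.exp (2 * Real.pi * I / 3)
          * (starRingEnd ℂ) (Complex.exp (-(5 * Real.pi * I) / 24))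
      + (1 / Real.sqrt (2 + Real.sqrt 2) : ℝ) * (starRingEnd ℂ) (Complex.exp (2 * Real.pi * I / 3))
          * Complex.exp (-(5 * Real.pi * I) / 24) = 0 := by
  have h1 : (2 * (Real.pi : ℂ) * I / 3 : ℂ) = (2 * Real.pi / 3 : ℝ) * I := by
    push_cast; ring
  have h2 : (-(5 * (Real.pi : ℂ) * I) / 24 : ℂ) = (-(5 * Real.pi) / 24 : ℝ) * I := by
    push_cast; ring
  rw [h1, h2, exp_mul_I, exp_mul_I, ← Complex.ofReal_cos, ← Complex.ofReal_sin,
    ← Complex.ofReal_cos, ← Complex.ofReal_sin]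
  have hconj : ∀ a b : ℝ, (starRingEnd ℂ) ((a : ℂ) + (b : ℂ) * I) = (a : ℂ) - (b : ℂ) * I := by
    intro a b
    simp [Complex.ext_iff]
  rw [hconj, hconj]
  have hc1 : Real.cos (2 * Real.pi / 3) = -(1/2) := by
    have : (2 : ℝ) * Real.pi / 3 = Real.pi - Real.pi / 3 := by ring
    rw [this, Real.cos_pi_sub, Real.cos_pi_div_three]
  have hs1 : Real.sin (2 * Real.pi / 3) = Real.sqrt 3 / 2 := by
    have : (2 : ℝ) * Real.pi / 3 = Real.pi - Real.pi / 3 := by ring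
    rw [this, Real.sin_pi_sub, Real.sin_pi_div_three]
  -- cos/sin of -(5π)/24 : combine angles. 2π/3 - 5π/24 = 11π/24? no...
  -- expand: term2 = x*(c1 + s1 I)*(c2 - s2 I), term3 = x*(c1 - s1 I)*(c2 + s2 I)
  -- with c2 = cos(-5π/24), s2 = sin(-5π/24). Sum = 1 + 2x(c1 c2 + s1 s2)
  -- = 1 + 2x cos(2π/3 - (-5π/24))?? cos(a-b) = ca cb + sa sb, so = cos(2π/3 + 5π/24) = cos(7π/8).
  set x : ℝ := 1 / Real.sqrt (2 + Real.sqrt 2)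
  have key : 1 + 2 * x * (Real.cos (2*Real.pi/3) * Real.cos (-(5*Real.pi)/24)
      + Real.sin (2*Real.pi/3) * Real.sin (-(5*Real.pi)/24)) = 0 := by
    rw [← Real.cos_sub]
    have hang : 2*Real.pi/3 - (-(5*Real.pi)/24) = Real.pi - Real.pi/8 := by ring
    rw [hang, Real.cos_pi_sub, Real.cos_pi_div_eight]
    have hpos : (0:ℝ) < Real.sqrt (2 + Real.sqrt 2) := by
      apply Real.sqrt_pos.2
      positivity
    field_simp [x]
    ring_nf
    simp only [x]
    rw [one_div, inv_mul_cancel₀ hpos.ne', sub_self]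
  have := congrArg (fun r : ℝ => (r : ℂ)) key
  push_cast at this
  rw [← this]
  push_cast
  ring_nf
  rw [I_sq]
  ring
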